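/- Let A, B be effects on a Hilbert space H. If B is a convex combination of A, I - A, 0, and I, then every effect coexistent with A is also coexistent with B. -/

import Mathlib

set_option maxHeartbeats 1000000


noncomputable section

/-- An effect on a complex Hilbert space: a positive operator below the identity. -/
def IsEffect {H : Type*} [NormedAddCommGroup H] [InnerProductSpace ℂ H] [CompleteSpace H]
    (A : H →L[ℂ] H) : Prop :=
  A.IsPositive ∧ ((1 : H →L[ℂ] H) - A).IsPositive

/-- Effects `A`, `B` are coexistent: there are effects `M ≤ A`, `N ≤ I - A` with `M + N = B`. -/
def Coexistent {H : Type*} [NormedAddCommGroup H] [InnerProductSpace ℂ H] [CompleteSpace H]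
    (A B : H →L[ℂ] H) : Prop :=
  ∃ M N : H →L[ℂ] H, IsEffect M ∧ IsEffect N ∧
    (A - M).IsPositive ∧ (((1 : H →L[ℂ] H) - A) - N).IsPositive ∧ M + N = B

/-- A rank-one orthogonal projection. -/
def IsRankOneProjection {H : Type*} [NormedAddCommGroup H] [InnerProductSpace ℂ H]
    [CompleteSpace H] (P : H →L[ℂ] H) : Prop :=
  IsSelfAdjoint P ∧ P ∘L P = P ∧ Module.finrank ℂ (LinearMap.range (P : H →ₗ[ℂ] H)) = 1

/-- The strength function `Λ(B,P) = sup {λ ≥ 0 : λP ≤ B}`. -/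
def strength {H : Type*} [NormedAddCommGroup H] [InnerProductSpace ℂ H] [CompleteSpace H]
    (B P : H →L[ℂ] H) : ℝ :=
  sSup {l : ℝ | 0 ≤ l ∧ (B - (l : ℂ) • P).IsPositive}

abbrev E2 := EuclideanSpace ℂ (Fin 2)


lemma isPositive_smul_of_nonneg {H : Type*} [NormedAddCommGroup H] [InnerProductSpace ℂ H]
    [CompleteSpace H] {r : ℝ} (hr : 0 ≤ r) {T : H →L[ℂ] H} (hT : T.IsPositive) :
    ((r : ℂ) • T).IsPositive := by
  have hsa : IsSelfAdjoint ((r : ℂ) • T) := by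
    rw [IsSelfAdjoint, star_smul, hT.isSelfAdjoint.star_eq, Complex.star_def, Complex.conj_ofReal]
  refine ContinuousLinearMap.isPositive_def'.mpr ⟨hsa, fun x => ?_⟩
  have h : ((r : ℂ) • T).reApplyInnerSelf x = r * T.reApplyInnerSelf x := by
    simp only [ContinuousLinearMap.reApplyInnerSelf, ContinuousLinearMap.smul_apply,
      inner_smul_left, Complex.conj_ofReal]
    simp [RCLike.mul_re]
  rw [h]
  exact mul_nonneg hr (hT.2 x)

theorem coexistent_subset_of_convex_combination {H : Type*} [NormedAddCommGroup H]
    [InnerProductSpace ℂ H] [CompleteSpace H] (A B : H →L[ℂ] H) (hA : IsEffect A)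
    (a b c d : ℝ) (ha : 0 ≤ a) (hb : 0 ≤ b) (hc : 0 ≤ c) (hd : 0 ≤ d)
    (hsum : a + b + c + d = 1)
    (hB : B = (a : ℂ) • A + (b : ℂ) • ((1 : H →L[ℂ] H) - A) +
      (c : ℂ) • (0 : H →L[ℂ] H) + (d : ℂ) • (1 : H →L[ℂ] H)) :
    ∀ C : H →L[ℂ] H, IsEffect C → Coexistent A C → Coexistent B C := by
  intro C hC hco
  obtain ⟨M, N, hM, hN, hAM, hAN, hMN⟩ := hco
  have hsumC : (a : ℂ) + b + c + d = 1 := by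
    exact_mod_cast hsum
  -- positivity facts
  have hMpos := hM.1
  have hNpos := hN.1
  have hCpos : ((1 : H →L[ℂ] H) - (M + N)).IsPositive := by
    have := hAM.add hAN
    have e : (A - M) + (((1 : H →L[ℂ] H) - A) - N) = (1 : H →L[ℂ] H) - (M + N) := by abel
    rwa [e] at this
  set M' : H →L[ℂ] H := (a : ℂ) • M + (b : ℂ) • N + (d : ℂ) • (M + N) with hM'def
  set N' : H →L[ℂ] H := (a : ℂ) • N + (b : ℂ) • M + (c : ℂ) • (M + N) with hN'def
  have hBM' : B - M' = (a : ℂ) • (A - M) + (b : ℂ) • (((1 : H →L[ℂ] H) - A) - N)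
      + (d : ℂ) • ((1 : H →L[ℂ] H) - (M + N)) := by
    rw [hB, hM'def]; module
  have hBN' : ((1 : H →L[ℂ] H) - B) - N' = (a : ℂ) • (((1 : H →L[ℂ] H) - A) - N)
      + (b : ℂ) • (A - M) + (c : ℂ) • ((1 : H →L[ℂ] H) - (M + N)) := by
    rw [hB, hN'def]
    linear_combination (norm := module) hsumC • ((-1:ℂ) • (1 : H →L[ℂ] H))
  have hBM'pos : (B - M').IsPositive := by
    rw [hBM']
    exact ((isPositive_smul_of_nonneg ha hAM).add
      (isPositive_smul_of_nonneg hb hAN)).add (isPositive_smul_of_nonneg hd hCpos)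
  have hBN'pos : (((1 : H →L[ℂ] H) - B) - N').IsPositive := by
    rw [hBN']
    exact ((isPositive_smul_of_nonneg ha hAN).add
      (isPositive_smul_of_nonneg hb hAM)).add (isPositive_smul_of_nonneg hc hCpos)
  have hM'pos : M'.IsPositive :=
    ((isPositive_smul_of_nonneg ha hMpos).add
      (isPositive_smul_of_nonneg hb hNpos)).add
      (isPositive_smul_of_nonneg hd (hMpos.add hNpos))
  have hN'pos : N'.IsPositive :=
    ((isPositive_smul_of_nonneg ha hNpos).add
      (isPositive_smul_of_nonneg hb hMpos)).add
      (isPositive_smul_of_nonneg hc (hMpos.add hNpos))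
  have hsumMN : M' + N' = C := by
    rw [hM'def, hN'def, ← hMN]
    linear_combination (norm := module) hsumC • (M + N)
  have hBpos : B.IsPositive := by
    have e : B = (B - M') + M' := by abel
    rw [e]
    exact hBM'pos.add hM'pos
  have hM'eff : IsEffect M' := by
    refine ⟨hM'pos, ?_⟩
    have e : (1 : H →L[ℂ] H) - M' = (((1 : H →L[ℂ] H) - B) - N') + (N' + (B - M')) := by abel
    rw [e]
    exact hBN'pos.add (hN'pos.add hBM'pos)
  have hN'eff : IsEffect N' := by
    refine ⟨hN'pos, ?_⟩
    have e : (1 : H →L[ℂ] H) - N' = (((1 : H →L[ℂ] H) - B) - N') + B := by abel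
    rw [e]
    exact hBN'pos.add hBpos
  exact ⟨M', N', hM'eff, hN'eff, hBM'pos, hBN'pos, hsumMN⟩
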